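/- Let (x1, x2, x3) ∈ ℂ³ with |x3| < 1. Suppose for every z with |z| = 1 the pair (s_z, p_z) = (x1 + z·x2, z·x3) satisfies |s_z - conj(s_z)·p_z| < 1 - |p_z|². Define β1 = (x1 - conj(x2)·x3)/(1 - |x3|²) and β2 = (x2 - conj(x1)·x3)/(1 - |x3|²). Then |β1| + |β2| < 1. -/

import Mathlib

open ComplexConjugate

theorem stmt_2 (x1 x2 x3 : ℂ) (h3 : ‖x3‖ < 1)
    (h : ∀ z : ℂ, ‖z‖ = 1 →
      ‖(x1 + z * x2) - conj (x1 + z * x2) * (z * x3)‖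
        < 1 - ‖z * x3‖ ^ 2)
    (β1 β2 : ℂ)
    (hβ1 : β1 = (x1 - conj x2 * x3) / ((1 : ℂ) - ((‖x3‖ : ℝ) : ℂ) ^ 2))
    (hβ2 : β2 = (x2 - conj x1 * x3) / ((1 : ℂ) - ((‖x3‖ : ℝ) : ℂ) ^ 2)) :
    ‖β1‖ + ‖β2‖ < 1 := by
  have hd : (0:ℝ) < 1 - ‖x3‖ ^ 2 := by
    nlinarith [norm_nonneg x3]
  have hdc : ((1 : ℂ) - ((‖x3‖ : ℝ) : ℂ) ^ 2) = ((1 - ‖x3‖ ^ 2 : ℝ) : ℂ) := by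
    push_cast; ring
  have hdne : ((1 : ℂ) - ((‖x3‖ : ℝ) : ℂ) ^ 2) ≠ 0 := by
    rw [hdc]
    exact_mod_cast ne_of_gt hd
  have key : ∀ z : ℂ, ‖z‖ = 1 → ‖β1 + z * β2‖ < 1 := by
    intro z hz
    have hzz : conj z * z = 1 := by
      rw [mul_comm, Complex.mul_conj]
      norm_cast
      simp [Complex.normSq_eq_norm_sq, hz]
    have h1 := h z hz
    have hexpr : (x1 + z * x2) - conj (x1 + z * x2) * (z * x3)
        = (x1 - conj x2 * x3) + z * (x2 - conj x1 * x3) := by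
      simp only [map_add, map_mul]
      linear_combination (-(conj x2 * x3)) * hzz
    have hexpr2 : ((1 : ℂ) - ((‖x3‖ : ℝ) : ℂ) ^ 2) * (β1 + z * β2)
        = (x1 - conj x2 * x3) + z * (x2 - conj x1 * x3) := by
      rw [hβ1, hβ2]
      field_simp
    have habs : ‖z * x3‖ = ‖x3‖ := by
      simp [norm_mul, hz]
    rw [habs, hexpr, ← hexpr2, norm_mul] at h1
    have hda : ‖(1 : ℂ) - ((‖x3‖ : ℝ) : ℂ) ^ 2‖ = 1 - ‖x3‖ ^ 2 := by
      rw [hdc, Complex.norm_real, Real.norm_eq_abs, abs_of_pos hd]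
    rw [hda] at h1
    nlinarith [norm_nonneg (β1 + z * β2)]
  by_cases h1z : β1 = 0
  · have := key 1 (by simp)
    simpa [h1z] using this
  by_cases h2z : β2 = 0
  · have := key 1 (by simp)
    simpa [h2z] using this
  · have ha1 : ‖β1‖ ≠ 0 := by simpa using h1z
    have ha2 : ‖β2‖ ≠ 0 := by simpa using h2z
    set c : ℂ := ((‖β1‖ * ‖β2‖ : ℝ) : ℂ) with hc
    have hcne : c ≠ 0 := by
      simp [hc, ha1, ha2]
    set z : ℂ := (β1 * conj β2) / c with hzdef
    have hzabs : ‖z‖ = 1 := by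
      rw [hzdef, norm_div, norm_mul, Complex.norm_conj, hc, Complex.norm_real, Real.norm_eq_abs,
        abs_of_nonneg (by positivity)]
      field_simp
    have hb2 : conj β2 * β2 = ((‖β2‖ ^ 2 : ℝ) : ℂ) := by
      rw [mul_comm, Complex.mul_conj]
      norm_cast
      exact Complex.normSq_eq_norm_sq β2
    have hr : (0:ℝ) ≤ ‖β2‖ / ‖β1‖ := by positivity
    have hzb : β1 + z * β2 = β1 * ((1 + ‖β2‖ / ‖β1‖ : ℝ) : ℂ) := by
      rw [hzdef, div_mul_eq_mul_div, mul_assoc, hb2, hc]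
      have c1 : ((‖β1‖ : ℝ) : ℂ) ≠ 0 := by exact_mod_cast ha1
      have c2 : ((‖β2‖ : ℝ) : ℂ) ≠ 0 := by exact_mod_cast ha2
      rw [eq_comm]
      push_cast
      field_simp
    have habs2 : ‖β1 + z * β2‖ = ‖β1‖ + ‖β2‖ := by
      rw [hzb, norm_mul, Complex.norm_real, Real.norm_eq_abs, abs_of_nonneg (by linarith)]
      field_simp
    have := key z hzabs
    rwa [habs2] at this
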